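/- Let G be a biconnected graph with an outer k-planar drawing, and let u, v be two distinct vertices of G. Then the number of connected components of G − {u, v} is at most 2k + 3. -/

import Mathlib

open Function

/-- Position of the lower endpoint of an edge in a circular drawing given by
vertex positions `π`. -/
def elo {V : Type*} (π : V → ℕ) : Sym2 V → ℕ :=
  Sym2.lift ⟨fun a b => min (π a) (π b), fun a b => min_comm (π a) (π b)⟩

/-- Position of the upper endpoint of an edge in a circular drawing. -/
def ehi {V : Type*} (π : V → ℕ) : Sym2 V → ℕ :=
  Sym2.lift ⟨fun a b => max (π a) (π b), fun a b => max_comm (π a) (π b)⟩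

/-- Two edges (or vertex pairs) cross (equivalently, the first pierces the
second) in the circular drawing given by positions `π`:
`i < i' < j < j'` or `i' < i < j' < j`. -/
def ecross {V : Type*} (π : V → ℕ) (e f : Sym2 V) : Prop :=
  (elo π e < elo π f ∧ elo π f < ehi π e ∧ ehi π e < ehi π f) ∨
  (elo π f < elo π e ∧ elo π e < ehi π f ∧ ehi π f < ehi π e)

/-- The number of edges of `G` crossing `e` in the circular drawing `π`. -/
noncomputable def crossNum {V : Type*} (G : SimpleGraph V) (π : V → ℕ)
    (e : Sym2 V) : ℕ :=
  {f | f ∈ G.edgeSet ∧ ecross π e f}.ncard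

/-- `π` is an outer `k`-planar drawing of `G`: an injective assignment of
positions (a circular order) such that every edge crosses at most `k` edges. -/
def IsOuterKPlanar {V : Type*} (G : SimpleGraph V) (k : ℕ) (π : V → ℕ) : Prop :=
  Injective π ∧ ∀ e ∈ G.edgeSet, crossNum G π e ≤ k

/-- `G` is biconnected: connected and without cutvertices. -/
def Biconnected {V : Type*} (G : SimpleGraph V) : Prop :=
  G.Connected ∧ ∀ x : V, (G.induce {y : V | y ≠ x}).Connected

namespace Aux16

open SimpleGraph

variable {V : Type*}

lemma elo_mk (π : V → ℕ) (a b : V) : elo π s(a, b) = min (π a) (π b) := rfl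
lemma ehi_mk (π : V → ℕ) (a b : V) : ehi π s(a, b) = max (π a) (π b) := rfl

lemma ecross_irrefl (π : V → ℕ) (e : Sym2 V) : ¬ ecross π e e := by
  rintro (⟨h, -⟩ | ⟨h, -⟩) <;> exact lt_irrefl _ h

set_option maxHeartbeats 4000000 in
lemma ecross_key (c M pa pb px py sa sb sx sy : ℕ)
    (ha : pa < M) (hb : pb < M) (hx : px < M) (hy : py < M)
    (hsa : (pa < c ∧ sa = pa + M) ∨ (c ≤ pa ∧ sa = pa - c))
    (hsb : (pb < c ∧ sb = pb + M) ∨ (c ≤ pb ∧ sb = pb - c))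
    (hsx : (px < c ∧ sx = px + M) ∨ (c ≤ px ∧ sx = px - c))
    (hsy : (py < c ∧ sy = py + M) ∨ (c ≤ py ∧ sy = py - c)) :
    ((min sa sb < min sx sy ∧ min sx sy < max sa sb ∧ max sa sb < max sx sy) ∨
     (min sx sy < min sa sb ∧ min sa sb < max sx sy ∧ max sx sy < max sa sb)) ↔
    ((min pa pb < min px py ∧ min px py < max pa pb ∧ max pa pb < max px py) ∨
     (min px py < min pa pb ∧ min pa pb < max px py ∧ max px py < max pa pb)) := by
  rcases hsa with ⟨h1,e1⟩|⟨h1,e1⟩ <;> rcases hsb with ⟨h2,e2⟩|⟨h2,e2⟩ <;>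
    rcases hsx with ⟨h3,e3⟩|⟨h3,e3⟩ <;> rcases hsy with ⟨h4,e4⟩|⟨h4,e4⟩ <;>
    subst e1 e2 e3 e4 <;> omega

set_option maxHeartbeats 1000000 in
lemma ecross_rot (π σ : V → ℕ) (c M : ℕ) (hM : ∀ w, π w < M)
    (hσ : ∀ w, (π w < c ∧ σ w = π w + M) ∨ (c ≤ π w ∧ σ w = π w - c))
    (e f : Sym2 V) : ecross σ e f ↔ ecross π e f := by
  induction e using Sym2.ind with | _ a b =>
  induction f using Sym2.ind with | _ x y =>
  simp only [ecross, elo_mk, ehi_mk]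
  exact ecross_key c M (π a) (π b) (π x) (π y) (σ a) (σ b) (σ x) (σ y)
    (hM a) (hM b) (hM x) (hM y) (hσ a) (hσ b) (hσ x) (hσ y)

lemma straddle {G : SimpleGraph V} (σ : V → ℕ) (α β : ℕ) {p q : V} (w : G.Walk p q)
    (hp1 : α < σ p) (hp2 : σ p < β) (hq : σ q < α ∨ β < σ q)
    (hsupp : ∀ x ∈ w.support, σ x ≠ α ∧ σ x ≠ β) :
    ∃ x y, s(x, y) ∈ w.edges ∧ x ∈ w.support ∧ y ∈ w.support ∧
      α < σ x ∧ σ x < β ∧ (σ y < α ∨ β < σ y) := by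
  induction w with
  | nil => omega
  | @cons p r q h w ih =>
    by_cases hr : α < σ r ∧ σ r < β
    · obtain ⟨x, y, he, hxs, hys, h1, h2, h3⟩ := ih hr.1 hr.2 hq
        (fun x hx => hsupp x (by simp [hx]))
      exact ⟨x, y, by simp [he], by simp [hxs], by simp [hys], h1, h2, h3⟩
    · have hrr := hsupp r (by simp)
      refine ⟨p, r, by simp, by simp, by simp, hp1, hp2, by omega⟩

lemma walk_in_comp {G : SimpleGraph V} {S : Set V} {x y : ↥S}
    (w : (G.induce S).Walk x y) :
    ∃ w' : G.Walk x.val y.val, ∀ z ∈ w'.support, ∃ hz : z ∈ S,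
      (G.induce S).connectedComponentMk ⟨z, hz⟩ = (G.induce S).connectedComponentMk x := by
  induction w with
  | nil =>
    refine ⟨SimpleGraph.Walk.nil, ?_⟩
    intro z hz
    simp only [SimpleGraph.Walk.support_nil, List.mem_singleton] at hz
    subst hz
    exact ⟨Subtype.coe_prop _, rfl⟩
  | @cons x r y h w ih =>
    obtain ⟨w', hw'⟩ := ih
    have hG : G.Adj x.val r.val := h
    refine ⟨SimpleGraph.Walk.cons hG w', ?_⟩
    intro z hz
    rw [SimpleGraph.Walk.support_cons, List.mem_cons] at hz
    rcases hz with rfl | hz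
    · exact ⟨x.2, rfl⟩
    · obtain ⟨hzS, e⟩ := hw' z hz
      exact ⟨hzS, e.trans (SimpleGraph.ConnectedComponent.connectedComponentMk_eq_of_adj h).symm⟩

lemma nbr_aux {G : SimpleGraph V} {u v : V} {S : Set V}
    (hS : ∀ w, w ∈ S ↔ (w ≠ u ∧ w ≠ v))
    {x t : {y : V // y ≠ v}} (w : (G.induce {y : V | y ≠ v}).Walk x t)
    (ht : t.val = u) (hxS : x.val ∈ S) :
    ∃ d, ∃ hd : d ∈ S, G.Adj u d ∧
      (G.induce S).Reachable ⟨d, hd⟩ ⟨x.val, hxS⟩ := by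
  induction w with
  | nil =>
    exact absurd ht ((hS _).mp hxS).1
  | @cons x r y h w ih =>
    have hG : G.Adj x.val r.val := h
    by_cases hru : r.val = u
    · refine ⟨x.val, hxS, ?_, SimpleGraph.Reachable.refl _⟩
      rw [hru] at hG
      exact hG.symm
    · have hrS : r.val ∈ S := (hS r.val).mpr ⟨hru, r.2⟩
      obtain ⟨d, hd, hadj, hreach⟩ := ih ht hrS
      refine ⟨d, hd, hadj, hreach.trans ?_⟩
      have hA : (G.induce S).Adj ⟨r.val, hrS⟩ ⟨x.val, hxS⟩ := hG.symm
      exact hA.reachable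

lemma countCC {G : SimpleGraph V} {S : Set V} {u v : V}
    (cset : (G.induce S).ConnectedComponent → Set V)
    (hmemS : ∀ K w, w ∈ cset K → w ≠ u ∧ w ≠ v)
    (hdisj : ∀ K K' w, w ∈ cset K → w ∈ cset K' → K = K')
    (T : Set (Sym2 V)) (hT : T.Finite)
    (F : (G.induce S).ConnectedComponent → Sym2 V)
    (hFT : ∀ K, F K ∈ T)
    (hFpt : ∀ K, ∃ a, a ∈ F K ∧ a ∈ cset K)
    (hFcover : ∀ K a, a ∈ F K → a ∈ cset K ∪ {u, v}) :
    Nat.card (G.induce S).ConnectedComponent ≤ T.ncard := by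
  have hinj : Injective F := by
    intro K K' h
    obtain ⟨a, haF, haK⟩ := hFpt K
    have haF' : a ∈ F K' := h ▸ haF
    rcases hFcover K' a haF' with h2 | h2
    · exact hdisj _ _ _ haK h2
    · exfalso
      obtain ⟨hu, hv⟩ := hmemS K a haK
      rcases h2 with h2 | h2
      · exact hu h2
      · exact hv h2
  calc Nat.card (G.induce S).ConnectedComponent
      = (Set.univ : Set (G.induce S).ConnectedComponent).ncard := (Set.ncard_univ _).symm
    _ ≤ T.ncard := Set.ncard_le_ncard_of_injOn F (fun K _ => hFT K) hinj.injOn hT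

lemma side [Fintype V] {G : SimpleGraph V} {S : Set V} (σ : V → ℕ) (hinj : Injective σ)
    (u v : V) (hσuv : σ u < σ v)
    (cset : (G.induce S).ConnectedComponent → Set V)
    (hmemS : ∀ K w, w ∈ cset K → w ≠ u ∧ w ≠ v)
    (hdisj : ∀ K K' w, w ∈ cset K → w ∈ cset K' → K = K')
    (hcover : ∀ w, w ≠ u → w ≠ v → ∃ K, w ∈ cset K)
    (hnbrU : ∀ K, ∃ y, y ∈ cset K ∧ G.Adj u y)
    (hnbrV : ∀ K, ∃ d, d ∈ cset K ∧ G.Adj v d)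
    (hwalks : ∀ K c c', c ∈ cset K → c' ∈ cset K →
      ∃ w : G.Walk c c', ∀ x ∈ w.support, x ∈ cset K)
    (hex : ∃ K, ∀ w ∈ cset K, σ u < σ w ∧ σ w < σ v) :
    ∃ (K₀ : (G.induce S).ConnectedComponent) (e : Sym2 V), e ∈ G.edgeSet ∧
      (∀ a ∈ e, a ∈ cset K₀ ∪ {u, v}) ∧ (∃ a, a ∈ e ∧ a ∈ cset K₀) ∧
      ∀ K, (∀ w ∈ cset K, σ u < σ w ∧ σ w < σ v) → K ≠ K₀ →
        ∃ f, f ∈ G.edgeSet ∧ ecross σ e f ∧ (∀ a ∈ f, a ∈ cset K ∪ {u, v}) ∧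
          (∃ a, a ∈ f ∧ a ∈ cset K) := by
  classical
  have huvne : u ≠ v := fun h => absurd hσuv (by rw [h]; exact lt_irrefl _)
  obtain ⟨K₁, hK₁⟩ := hex
  obtain ⟨y₁, hy₁K, hy₁adj⟩ := hnbrU K₁
  have hNAne : {w : V | G.Adj u w ∧ σ u < σ w ∧ σ w < σ v}.Nonempty :=
    ⟨y₁, hy₁adj, hK₁ y₁ hy₁K⟩
  obtain ⟨z, hzNA, hzmax⟩ := Set.exists_max_image _ σ (Set.toFinite _) hNAne
  obtain ⟨hzadj, hzu, hzv⟩ := hzNA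
  have hzne_v : z ≠ v := fun h => absurd hzv (by rw [h]; exact lt_irrefl _)
  obtain ⟨K₀, hzK₀⟩ := hcover z hzadj.ne' hzne_v
  refine ⟨K₀, s(u, z), hzadj, ?_, ⟨z, by simp, hzK₀⟩, ?_⟩
  · intro a ha
    rw [Sym2.mem_iff] at ha
    rcases ha with rfl | rfl
    · exact Or.inr (by simp)
    · exact Or.inl hzK₀
  · intro K hKA hKne
    obtain ⟨y, hyK, hyadj⟩ := hnbrU K
    obtain ⟨d, hdK, hdadj⟩ := hnbrV K
    have hyA := hKA y hyK
    have hyz : σ y < σ z := by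
      refine lt_of_le_of_ne (hzmax y ⟨hyadj, hyA⟩) (fun h => hKne ?_)
      exact hdisj K K₀ y hyK ((hinj h) ▸ hzK₀)
    obtain ⟨w₁, hw₁⟩ := hwalks K y d hyK hdK
    set W : G.Walk y v := w₁.concat hdadj.symm with hWdef
    have hWsupp : ∀ x ∈ W.support, x ∈ cset K ∨ x = v := by
      intro x hx
      rw [hWdef, SimpleGraph.Walk.support_concat,
        List.mem_append, List.mem_singleton] at hx
      rcases hx with hx | rfl
      · exact Or.inl (hw₁ x hx)
      · exact Or.inr rfl
    have hsupppos : ∀ x ∈ W.support, σ x ≠ σ u ∧ σ x ≠ σ z := by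
      intro x hx
      rcases hWsupp x hx with hxK | rfl
      · have hxu : x ≠ u := (hmemS K x hxK).1
        have hxz : x ≠ z := fun h => hKne (hdisj K K₀ x hxK (h ▸ hzK₀))
        exact ⟨fun h => hxu (hinj h), fun h => hxz (hinj h)⟩
      · exact ⟨fun h => huvne (hinj h).symm, fun h => hzne_v (hinj h).symm⟩
    obtain ⟨xx, yy, hedge, hxs, hys, h1, h2, h3⟩ :=
      straddle σ (σ u) (σ z) W hyA.1 hyz (Or.inr hzv) hsupppos
    have hxxK : xx ∈ cset K := by
      rcases hWsupp xx hxs with hxK | rfl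
      · exact hxK
      · exact absurd (h2.trans hzv) (lt_irrefl _)
    have hyyz : σ z < σ yy := by
      rcases h3 with h3 | h3
      · exfalso
        rcases hWsupp yy hys with hyyK | rfl
        · exact absurd ((hKA yy hyyK).1.trans h3) (lt_irrefl _)
        · exact absurd (hσuv.trans h3) (lt_irrefl _)
      · exact h3
    refine ⟨s(xx, yy), W.edges_subset_edgeSet hedge, ?_, ?_, ⟨xx, by simp, hxxK⟩⟩
    · simp only [ecross, elo_mk, ehi_mk]
      omega
    · intro a ha
      rw [Sym2.mem_iff] at ha
      have key : ∀ b, b ∈ W.support → b ∈ cset K ∪ {u, v} := by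
        intro b hb
        rcases hWsupp b hb with hbK | rfl
        · exact Or.inl hbK
        · exact Or.inr (by simp)
      rcases ha with rfl | rfl
      · exact key a hxs
      · exact key a hys

set_option maxHeartbeats 1000000 in
lemma core [Fintype V] {G : SimpleGraph V} {S : Set V} (k : ℕ) (u v : V)
    (π : V → ℕ) (hinjπ : Injective π)
    (hcrossπ : ∀ e ∈ G.edgeSet, crossNum G π e ≤ k) (hlt : π u < π v)
    (cset : (G.induce S).ConnectedComponent → Set V)
    (hmemS : ∀ K w, w ∈ cset K → w ≠ u ∧ w ≠ v)
    (hdisj : ∀ K K' w, w ∈ cset K → w ∈ cset K' → K = K')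
    (hcover : ∀ w, w ≠ u → w ≠ v → ∃ K, w ∈ cset K)
    (hadjc : ∀ x y K K', G.Adj x y → x ∈ cset K → y ∈ cset K' → K = K')
    (hnbrU : ∀ K, ∃ y, y ∈ cset K ∧ G.Adj u y)
    (hnbrV : ∀ K, ∃ d, d ∈ cset K ∧ G.Adj v d)
    (hwalks : ∀ K c c', c ∈ cset K → c' ∈ cset K →
      ∃ w : G.Walk c c', ∀ x ∈ w.support, x ∈ cset K) :
    Nat.card (G.induce S).ConnectedComponent ≤ 2 * k + 3 := by
  classical
  have huv : u ≠ v := fun h => absurd hlt (by rw [h]; exact lt_irrefl _)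
  by_cases hCC : Nonempty (G.induce S).ConnectedComponent
  swap
  · have : IsEmpty (G.induce S).ConnectedComponent := not_nonempty_iff.mp hCC
    simp [Nat.card_of_isEmpty]
  by_cases hstrad : ∃ x y, G.Adj x y ∧ (x ≠ u ∧ x ≠ v) ∧ (y ≠ u ∧ y ≠ v) ∧
      (π u < π x ∧ π x < π v) ∧ (π y < π u ∨ π v < π y)
  · -- Case 1 : an edge straddling the chord u-v exists
    obtain ⟨p, q, hpq, hpS, hqS, hpA, hqB⟩ := hstrad
    obtain ⟨K₀, hpK₀⟩ := hcover p hpS.1 hpS.2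
    obtain ⟨K₀', hqK₀'⟩ := hcover q hqS.1 hqS.2
    have hqK₀ : q ∈ cset K₀ := by
      have := hadjc q p K₀' K₀ hpq.symm hqK₀' hpK₀
      exact this ▸ hqK₀'
    have hmain : ∀ K, K ≠ K₀ → ∃ f, f ∈ G.edgeSet ∧ ecross π s(p, q) f ∧
        (∀ a ∈ f, a ∈ cset K ∪ {u, v}) ∧ (∃ a, a ∈ f ∧ a ∈ cset K) := by
      intro K hKne
      obtain ⟨y, hyK, hyadj⟩ := hnbrU K
      obtain ⟨d, hdK, hdadj⟩ := hnbrV K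
      obtain ⟨w₁, hw₁⟩ := hwalks K y d hyK hdK
      set W : G.Walk u v := SimpleGraph.Walk.cons hyadj (w₁.concat hdadj.symm) with hWdef
      have hWsupp : ∀ x ∈ W.support, x = u ∨ x ∈ cset K ∨ x = v := by
        intro x hx
        rw [hWdef, SimpleGraph.Walk.support_cons, List.mem_cons,
          SimpleGraph.Walk.support_concat,
          List.mem_append, List.mem_singleton] at hx
        rcases hx with rfl | hx | rfl
        · exact Or.inl rfl
        · exact Or.inr (Or.inl (hw₁ x hx))
        · exact Or.inr (Or.inr rfl)
      have hWedge : ∀ f ∈ W.edges, ∃ a, a ∈ f ∧ a ∈ cset K := by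
        intro f hf
        rw [hWdef, SimpleGraph.Walk.edges_cons, List.mem_cons,
          SimpleGraph.Walk.edges_concat, List.concat_eq_append,
          List.mem_append, List.mem_singleton] at hf
        rcases hf with rfl | hf | rfl
        · exact ⟨y, by simp, hyK⟩
        · induction f using Sym2.ind with | _ a b =>
            exact ⟨a, by simp, hw₁ a (w₁.fst_mem_support_of_mem_edges hf)⟩
        · exact ⟨d, by simp, hdK⟩
      have hWcover : ∀ b, b ∈ W.support → b ∈ cset K ∪ {u, v} := by
        intro b hb
        rcases hWsupp b hb with rfl | hb | rfl
        · exact Or.inr (by simp)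
        · exact Or.inl hb
        · exact Or.inr (by simp)
      have hnep : ∀ x, x ∈ cset K → x ≠ p ∧ x ≠ q := by
        intro x hxK
        constructor
        · exact fun h => hKne (hdisj K K₀ x hxK (h ▸ hpK₀))
        · exact fun h => hKne (hdisj K K₀ x hxK (h ▸ hqK₀))
      rcases hqB with hql | hqh
      · -- π q < π u
        have hsupppos : ∀ x ∈ W.support, π x ≠ π q ∧ π x ≠ π p := by
          intro x hx
          rcases hWsupp x hx with rfl | hxK | rfl
          · constructor <;> intro h <;> omega
          · obtain ⟨h1, h2⟩ := hnep x hxK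
            exact ⟨fun h => h2 (hinjπ h), fun h => h1 (hinjπ h)⟩
          · constructor <;> intro h <;> omega
        obtain ⟨xx, yy, hedge, hxs, hys, h1, h2, h3⟩ :=
          straddle π (π q) (π p) W hql hpA.1 (Or.inr hpA.2) hsupppos
        refine ⟨s(xx, yy), W.edges_subset_edgeSet hedge, ?_, ?_, hWedge _ hedge⟩
        · simp only [ecross, elo_mk, ehi_mk]
          omega
        · intro a ha
          rw [Sym2.mem_iff] at ha
          rcases ha with rfl | rfl
          · exact hWcover a hxs
          · exact hWcover a hys
      · -- π v < π q
        have hsupppos : ∀ x ∈ W.reverse.support, π x ≠ π p ∧ π x ≠ π q := by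
          intro x hx
          rw [SimpleGraph.Walk.support_reverse, List.mem_reverse] at hx
          rcases hWsupp x hx with rfl | hxK | rfl
          · constructor <;> intro h <;> omega
          · obtain ⟨h1, h2⟩ := hnep x hxK
            exact ⟨fun h => h1 (hinjπ h), fun h => h2 (hinjπ h)⟩
          · constructor <;> intro h <;> omega
        obtain ⟨xx, yy, hedge, hxs, hys, h1, h2, h3⟩ :=
          straddle π (π p) (π q) W.reverse hpA.2 hqh (Or.inl hpA.1) hsupppos
        rw [SimpleGraph.Walk.edges_reverse, List.mem_reverse] at hedge
        rw [SimpleGraph.Walk.support_reverse, List.mem_reverse] at hxs hys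
        refine ⟨s(xx, yy), W.edges_subset_edgeSet hedge, ?_, ?_, hWedge _ hedge⟩
        · simp only [ecross, elo_mk, ehi_mk]
          omega
        · intro a ha
          rw [Sym2.mem_iff] at ha
          rcases ha with rfl | rfl
          · exact hWcover a hxs
          · exact hWcover a hys
    -- counting for case 1
    set X : Set (Sym2 V) := {f | f ∈ G.edgeSet ∧ ecross π s(p, q) f} with hXdef
    have hXcard : X.ncard ≤ k := hcrossπ _ hpq
    set F : (G.induce S).ConnectedComponent → Sym2 V :=
      fun K => if h : K = K₀ then s(p, q) else (hmain K h).choose with hFdef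
    have hcnt := countCC cset hmemS hdisj (insert s(p, q) X) (Set.toFinite _) F ?_ ?_ ?_
    · refine hcnt.trans (le_trans (Set.ncard_insert_le _ _) (by omega))
    · intro K
      by_cases h : K = K₀
      · rw [hFdef]; simp only [dif_pos h]; exact Set.mem_insert _ _
      · rw [hFdef]; simp only [dif_neg h]
        obtain ⟨hE, hcr, _, _⟩ := (hmain K h).choose_spec
        exact Set.mem_insert_of_mem _ ⟨hE, hcr⟩
    · intro K
      by_cases h : K = K₀
      · rw [hFdef]; simp only [dif_pos h]
        exact ⟨p, by simp, h ▸ hpK₀⟩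
      · rw [hFdef]; simp only [dif_neg h]
        exact (hmain K h).choose_spec.2.2.2
    · intro K a ha
      by_cases h : K = K₀
      · rw [hFdef] at ha; simp only [dif_pos h] at ha
        rw [Sym2.mem_iff] at ha
        rcases ha with rfl | rfl
        · exact Or.inl (h ▸ hpK₀)
        · exact Or.inl (h ▸ hqK₀)
      · rw [hFdef] at ha; simp only [dif_neg h] at ha
        exact (hmain K h).choose_spec.2.2.1 a ha
  · -- Case 2 : no straddling edge; every component lies on one side
    have htype : ∀ K, (∀ w ∈ cset K, π u < π w ∧ π w < π v) ∨
        (∀ w ∈ cset K, π w < π u ∨ π v < π w) := by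
      intro K
      obtain ⟨y, hyK, hyadj⟩ := hnbrU K
      have hyne := hmemS K y hyK
      have hyu : π y ≠ π u := fun h => hyne.1 (hinjπ h)
      have hyv : π y ≠ π v := fun h => hyne.2 (hinjπ h)
      have hcontra : ∀ c c', c ∈ cset K → c' ∈ cset K →
          (π u < π c ∧ π c < π v) → (π c' < π u ∨ π v < π c') → False := by
        intro c c' hcK hc'K hcA hc'B
        obtain ⟨w₂, hw₂⟩ := hwalks K c c' hcK hc'K
        have hsupppos : ∀ x ∈ w₂.support, π x ≠ π u ∧ π x ≠ π v := by
          intro x hx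
          have hxne := hmemS K x (hw₂ x hx)
          exact ⟨fun h => hxne.1 (hinjπ h), fun h => hxne.2 (hinjπ h)⟩
        obtain ⟨xx, yy, hedge, hxs, hys, h1, h2, h3⟩ :=
          straddle π (π u) (π v) w₂ hcA.1 hcA.2 hc'B hsupppos
        exact hstrad ⟨xx, yy, w₂.adj_of_mem_edges hedge,
          hmemS K xx (hw₂ xx hxs), hmemS K yy (hw₂ yy hys), ⟨h1, h2⟩, h3⟩
      by_cases hyA : π u < π y ∧ π y < π v
      · left
        intro w hwK
        by_contra hw
        have hwne := hmemS K w hwK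
        have hwu : π w ≠ π u := fun h => hwne.1 (hinjπ h)
        have hwv : π w ≠ π v := fun h => hwne.2 (hinjπ h)
        exact hcontra y w hyK hwK hyA (by omega)
      · right
        intro w hwK
        by_contra hw
        push_neg at hw
        have hwne := hmemS K w hwK
        have hwu : π w ≠ π u := fun h => hwne.1 (hinjπ h)
        have hwv : π w ≠ π v := fun h => hwne.2 (hinjπ h)
        exact hcontra w y hwK hyK (by omega) (by omega)
    -- the rotated drawing
    set N : ℕ := Finset.univ.sup π + 1 with hNdef
    have hM : ∀ w, π w < N := fun w =>
      lt_of_le_of_lt (Finset.le_sup (Finset.mem_univ w)) (Nat.lt_succ_self _)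
    set σ : V → ℕ := fun w => if π w < π v then π w + N else π w - π v with hσdef
    have hσspec : ∀ w, (π w < π v ∧ σ w = π w + N) ∨ (π v ≤ π w ∧ σ w = π w - π v) := by
      intro w
      by_cases h : π w < π v
      · exact Or.inl ⟨h, by rw [hσdef]; simp [h]⟩
      · exact Or.inr ⟨le_of_not_gt h, by rw [hσdef]; simp [h]⟩
    have hrot : ∀ e f, ecross σ e f ↔ ecross π e f := ecross_rot π σ (π v) N hM hσspec
    have hσinj : Injective σ := by
      intro a b h
      apply hinjπ
      have ha := hM a; have hb := hM b
      rcases hσspec a with ⟨h1, e1⟩ | ⟨h1, e1⟩ <;> rcases hσspec b with ⟨h2, e2⟩ | ⟨h2, e2⟩ <;>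
        omega
    have hσvu : σ v < σ u := by
      have h1 := hM u
      rcases hσspec u with ⟨h2, e2⟩ | ⟨h2, e2⟩ <;> rcases hσspec v with ⟨h3, e3⟩ | ⟨h3, e3⟩ <;>
        omega
    have hBtoσ : ∀ K, (∀ w ∈ cset K, π w < π u ∨ π v < π w) →
        (∀ w ∈ cset K, σ v < σ w ∧ σ w < σ u) := by
      intro K hB w hwK
      have h := hB w hwK
      have h1 := hM w; have h2 := hM u
      rcases hσspec w with ⟨h3, e3⟩ | ⟨h3, e3⟩ <;> rcases hσspec v with ⟨h4, e4⟩ | ⟨h4, e4⟩ <;>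
        rcases hσspec u with ⟨h5, e5⟩ | ⟨h5, e5⟩ <;> omega
    have hmemS' : ∀ K w, w ∈ cset K → w ≠ v ∧ w ≠ u := fun K w h =>
      ⟨(hmemS K w h).2, (hmemS K w h).1⟩
    have hcover' : ∀ w, w ≠ v → w ≠ u → ∃ K, w ∈ cset K := fun w h1 h2 => hcover w h2 h1
    by_cases hA : ∃ K, ∀ w ∈ cset K, π u < π w ∧ π w < π v
    · by_cases hB : ∃ K, ∀ w ∈ cset K, π w < π u ∨ π v < π w
      · -- both sides present
        obtain ⟨KA, eA, heAE, heAcov, heApt, hmainA⟩ :=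
          side π hinjπ u v hlt cset hmemS hdisj hcover hnbrU hnbrV hwalks hA
        have hB' : ∃ K, ∀ w ∈ cset K, σ v < σ w ∧ σ w < σ u :=
          ⟨hB.choose, hBtoσ _ hB.choose_spec⟩
        obtain ⟨KB, eB, heBE, heBcov, heBpt, hmainB⟩ :=
          side σ hσinj v u hσvu cset hmemS' hdisj hcover' hnbrV hnbrU hwalks hB'
        set XA : Set (Sym2 V) := {f | f ∈ G.edgeSet ∧ ecross π eA f} with hXAdef
        set XB : Set (Sym2 V) := {f | f ∈ G.edgeSet ∧ ecross σ eB f} with hXBdef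
        have hXAcard : XA.ncard ≤ k := hcrossπ _ heAE
        have hXBcard : XB.ncard ≤ k := by
          have : XB = {f | f ∈ G.edgeSet ∧ ecross π eB f} := by
            ext f; exact and_congr_right fun _ => hrot eB f
          rw [this]
          exact hcrossπ _ heBE
        set F : (G.induce S).ConnectedComponent → Sym2 V := fun K =>
          if hA1 : ∀ w ∈ cset K, π u < π w ∧ π w < π v then
            (if h0 : K = KA then eA else (hmainA K hA1 h0).choose)
          else
            (if h0 : K = KB then eB else
              (hmainB K (hBtoσ K ((htype K).resolve_left hA1)) h0).choose) with hFdef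
        have hcnt := countCC cset hmemS hdisj (insert eA XA ∪ insert eB XB)
          (Set.toFinite _) F ?_ ?_ ?_
        · refine hcnt.trans (le_trans (Set.ncard_union_le _ _) ?_)
          have h1 := Set.ncard_insert_le eA XA
          have h2 := Set.ncard_insert_le eB XB
          omega
        · intro K
          rw [hFdef]
          by_cases hA1 : ∀ w ∈ cset K, π u < π w ∧ π w < π v
          · simp only [dif_pos hA1]
            by_cases h0 : K = KA
            · simp only [dif_pos h0]; exact Or.inl (Set.mem_insert _ _)
            · simp only [dif_neg h0]
              obtain ⟨hE, hcr, _, _⟩ := (hmainA K hA1 h0).choose_spec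
              exact Or.inl (Set.mem_insert_of_mem _ ⟨hE, hcr⟩)
          · simp only [dif_neg hA1]
            by_cases h0 : K = KB
            · simp only [dif_pos h0]; exact Or.inr (Set.mem_insert _ _)
            · simp only [dif_neg h0]
              obtain ⟨hE, hcr, _, _⟩ :=
                (hmainB K (hBtoσ K ((htype K).resolve_left hA1)) h0).choose_spec
              exact Or.inr (Set.mem_insert_of_mem _ ⟨hE, hcr⟩)
        · intro K
          rw [hFdef]
          by_cases hA1 : ∀ w ∈ cset K, π u < π w ∧ π w < π v
          · simp only [dif_pos hA1]
            by_cases h0 : K = KA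
            · simp only [dif_pos h0]
              obtain ⟨a, ha1, ha2⟩ := heApt
              exact ⟨a, ha1, h0 ▸ ha2⟩
            · simp only [dif_neg h0]
              exact (hmainA K hA1 h0).choose_spec.2.2.2
          · simp only [dif_neg hA1]
            by_cases h0 : K = KB
            · simp only [dif_pos h0]
              obtain ⟨a, ha1, ha2⟩ := heBpt
              exact ⟨a, ha1, h0 ▸ ha2⟩
            · simp only [dif_neg h0]
              exact (hmainB K (hBtoσ K ((htype K).resolve_left hA1)) h0).choose_spec.2.2.2
        · intro K a ha
          rw [hFdef] at ha
          by_cases hA1 : ∀ w ∈ cset K, π u < π w ∧ π w < π v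
          · simp only [dif_pos hA1] at ha
            by_cases h0 : K = KA
            · simp only [dif_pos h0] at ha
              subst h0
              exact heAcov a ha
            · simp only [dif_neg h0] at ha
              exact (hmainA K hA1 h0).choose_spec.2.2.1 a ha
          · simp only [dif_neg hA1] at ha
            by_cases h0 : K = KB
            · simp only [dif_pos h0] at ha
              subst h0
              rcases heBcov a ha with h | h
              · exact Or.inl h
              · rcases h with h | h
                · exact Or.inr (Or.inr h)
                · exact Or.inr (Or.inl h)
            · simp only [dif_neg h0] at ha
              rcases (hmainB K (hBtoσ K ((htype K).resolve_left hA1)) h0).choose_spec.2.2.1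
                a ha with h | h
              · exact Or.inl h
              · rcases h with h | h
                · exact Or.inr (Or.inr h)
                · exact Or.inr (Or.inl h)
      · -- only side A
        have hAll : ∀ K, ∀ w ∈ cset K, π u < π w ∧ π w < π v := by
          intro K
          exact (htype K).resolve_right (fun h => hB ⟨K, h⟩)
        obtain ⟨KA, eA, heAE, heAcov, heApt, hmainA⟩ :=
          side π hinjπ u v hlt cset hmemS hdisj hcover hnbrU hnbrV hwalks hA
        set XA : Set (Sym2 V) := {f | f ∈ G.edgeSet ∧ ecross π eA f} with hXAdef
        have hXAcard : XA.ncard ≤ k := hcrossπ _ heAE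
        set F : (G.induce S).ConnectedComponent → Sym2 V := fun K =>
          if h0 : K = KA then eA else (hmainA K (hAll K) h0).choose with hFdef
        have hcnt := countCC cset hmemS hdisj (insert eA XA) (Set.toFinite _) F ?_ ?_ ?_
        · refine hcnt.trans (le_trans (Set.ncard_insert_le _ _) (by omega))
        · intro K
          rw [hFdef]
          by_cases h0 : K = KA
          · simp only [dif_pos h0]; exact Set.mem_insert _ _
          · simp only [dif_neg h0]
            obtain ⟨hE, hcr, _, _⟩ := (hmainA K (hAll K) h0).choose_spec
            exact Set.mem_insert_of_mem _ ⟨hE, hcr⟩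
        · intro K
          rw [hFdef]
          by_cases h0 : K = KA
          · simp only [dif_pos h0]
            obtain ⟨a, ha1, ha2⟩ := heApt
            exact ⟨a, ha1, h0 ▸ ha2⟩
          · simp only [dif_neg h0]
            exact (hmainA K (hAll K) h0).choose_spec.2.2.2
        · intro K a ha
          rw [hFdef] at ha
          by_cases h0 : K = KA
          · simp only [dif_pos h0] at ha
            subst h0
            exact heAcov a ha
          · simp only [dif_neg h0] at ha
            exact (hmainA K (hAll K) h0).choose_spec.2.2.1 a ha
    · -- only side B (or nothing)
      have hAll : ∀ K, ∀ w ∈ cset K, σ v < σ w ∧ σ w < σ u := by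
        intro K
        exact hBtoσ K ((htype K).resolve_left (fun h => hA ⟨K, h⟩))
      have hB' : ∃ K, ∀ w ∈ cset K, σ v < σ w ∧ σ w < σ u := ⟨hCC.some, hAll _⟩
      obtain ⟨KB, eB, heBE, heBcov, heBpt, hmainB⟩ :=
        side σ hσinj v u hσvu cset hmemS' hdisj hcover' hnbrV hnbrU hwalks hB'
      set XB : Set (Sym2 V) := {f | f ∈ G.edgeSet ∧ ecross σ eB f} with hXBdef
      have hXBcard : XB.ncard ≤ k := by
        have : XB = {f | f ∈ G.edgeSet ∧ ecross π eB f} := by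
          ext f; exact and_congr_right fun _ => hrot eB f
        rw [this]
        exact hcrossπ _ heBE
      set F : (G.induce S).ConnectedComponent → Sym2 V := fun K =>
        if h0 : K = KB then eB else (hmainB K (hAll K) h0).choose with hFdef
      have hcnt := countCC cset hmemS hdisj (insert eB XB) (Set.toFinite _) F ?_ ?_ ?_
      · refine hcnt.trans (le_trans (Set.ncard_insert_le _ _) (by omega))
      · intro K
        rw [hFdef]
        by_cases h0 : K = KB
        · simp only [dif_pos h0]; exact Set.mem_insert _ _
        · simp only [dif_neg h0]
          obtain ⟨hE, hcr, _, _⟩ := (hmainB K (hAll K) h0).choose_spec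
          exact Set.mem_insert_of_mem _ ⟨hE, hcr⟩
      · intro K
        rw [hFdef]
        by_cases h0 : K = KB
        · simp only [dif_pos h0]
          obtain ⟨a, ha1, ha2⟩ := heBpt
          exact ⟨a, ha1, h0 ▸ ha2⟩
        · simp only [dif_neg h0]
          exact (hmainB K (hAll K) h0).choose_spec.2.2.2
      · intro K a ha
        rw [hFdef] at ha
        by_cases h0 : K = KB
        · simp only [dif_pos h0] at ha
          subst h0
          rcases heBcov a ha with h | h
          · exact Or.inl h
          · rcases h with h | h
            · exact Or.inr (Or.inr h)
            · exact Or.inr (Or.inl h)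
        · simp only [dif_neg h0] at ha
          rcases (hmainB K (hAll K) h0).choose_spec.2.2.1 a ha with h | h
          · exact Or.inl h
          · rcases h with h | h
            · exact Or.inr (Or.inr h)
            · exact Or.inr (Or.inl h)

end Aux16

theorem stmt16 {V : Type*} [Fintype V] (G : SimpleGraph V) (k : ℕ)
    (hbi : Biconnected G)
    (hdraw : ∃ π : V → ℕ, IsOuterKPlanar G k π)
    (u v : V) (huv : u ≠ v) :
    Nat.card ((G.induce {w : V | w ≠ u ∧ w ≠ v}).ConnectedComponent) ≤
      2 * k + 3 := by
  classical
  obtain ⟨π, hinjπ, hcross⟩ := hdraw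
  set S : Set V := {w : V | w ≠ u ∧ w ≠ v} with hSdef
  set cset : (G.induce S).ConnectedComponent → Set V :=
    fun K => {w | ∃ h : w ∈ S, (G.induce S).connectedComponentMk ⟨w, h⟩ = K} with hcsetdef
  have hmemS : ∀ K w, w ∈ cset K → w ≠ u ∧ w ≠ v := by
    rintro K w ⟨h, -⟩
    exact h
  have hdisj : ∀ K K' w, w ∈ cset K → w ∈ cset K' → K = K' := by
    rintro K K' w ⟨h1, e1⟩ ⟨h2, e2⟩
    rw [← e1, ← e2]
  have hcover : ∀ w, w ≠ u → w ≠ v → ∃ K, w ∈ cset K := by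
    intro w h1 h2
    exact ⟨(G.induce S).connectedComponentMk ⟨w, ⟨h1, h2⟩⟩, ⟨⟨h1, h2⟩, rfl⟩⟩
  have hadjc : ∀ x y K K', G.Adj x y → x ∈ cset K → y ∈ cset K' → K = K' := by
    rintro x y K K' hxy ⟨hx, ex⟩ ⟨hy, ey⟩
    have hA : (G.induce S).Adj ⟨x, hx⟩ ⟨y, hy⟩ := hxy
    rw [← ex, ← ey]
    exact SimpleGraph.ConnectedComponent.connectedComponentMk_eq_of_adj hA
  have hwalks : ∀ K c c', c ∈ cset K → c' ∈ cset K →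
      ∃ w : G.Walk c c', ∀ x ∈ w.support, x ∈ cset K := by
    rintro K c c' ⟨hc, ec⟩ ⟨hc', ec'⟩
    have hr : (G.induce S).Reachable ⟨c, hc⟩ ⟨c', hc'⟩ :=
      SimpleGraph.ConnectedComponent.exact (ec.trans ec'.symm)
    obtain ⟨wsub⟩ := hr
    obtain ⟨w', hw'⟩ := Aux16.walk_in_comp wsub
    refine ⟨w', fun x hx => ?_⟩
    obtain ⟨hxS, e⟩ := hw' x hx
    exact ⟨hxS, e.trans ec⟩
  have hnbrU : ∀ K, ∃ y, y ∈ cset K ∧ G.Adj u y := by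
    intro K
    obtain ⟨x, hx⟩ := K.exists_rep
    have hreach : (G.induce {y : V | y ≠ v}).Reachable ⟨x.val, x.2.2⟩ ⟨u, huv⟩ :=
      (hbi.2 v).preconnected _ _
    obtain ⟨w⟩ := hreach
    obtain ⟨d, hd, hadj, hreach2⟩ :=
      Aux16.nbr_aux (S := S) (fun w => Iff.rfl) w rfl x.2
    refine ⟨d, ⟨hd, ?_⟩, hadj⟩
    exact (SimpleGraph.ConnectedComponent.sound hreach2).trans hx
  have hnbrV : ∀ K, ∃ d, d ∈ cset K ∧ G.Adj v d := by
    intro K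
    obtain ⟨x, hx⟩ := K.exists_rep
    have hreach : (G.induce {y : V | y ≠ u}).Reachable ⟨x.val, x.2.1⟩ ⟨v, huv.symm⟩ :=
      (hbi.2 u).preconnected _ _
    obtain ⟨w⟩ := hreach
    have hS' : ∀ w, w ∈ S ↔ (w ≠ v ∧ w ≠ u) :=
      fun w => ⟨fun h => ⟨h.2, h.1⟩, fun h => ⟨h.2, h.1⟩⟩
    obtain ⟨d, hd, hadj, hreach2⟩ := Aux16.nbr_aux (S := S) hS' w rfl x.2
    refine ⟨d, ⟨hd, ?_⟩, hadj⟩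
    exact (SimpleGraph.ConnectedComponent.sound hreach2).trans hx
  have hne : π u ≠ π v := fun h => huv (hinjπ h)
  rcases lt_or_gt_of_ne hne with hlt | hgt
  · exact Aux16.core k u v π hinjπ hcross hlt cset hmemS hdisj hcover hadjc hnbrU hnbrV hwalks
  · have hmemS' : ∀ K w, w ∈ cset K → w ≠ v ∧ w ≠ u := fun K w h =>
      ⟨(hmemS K w h).2, (hmemS K w h).1⟩
    have hcover' : ∀ w, w ≠ v → w ≠ u → ∃ K, w ∈ cset K := fun w h1 h2 => hcover w h2 h1
    exact Aux16.core k v u π hinjπ hcross hgt cset hmemS' hdisj hcover' hadjc hnbrV hnbrU hwalks
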